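/- Let w : Fin (n+1) → ℤ and c ∈ ℤ. Let Y = { [x] ∈ ℙⁿ(ℂ) | (for all i, x i ≠ 0 implies w i ≥ c) and (there exists i with x i ≠ 0 and w i = c) } and Z = { [x] ∈ ℙⁿ(ℂ) | for all i, x i ≠ 0 implies w i = c }. Then for every nonzero x : Fin (n+1) → ℂ with [x] ∈ Y: (a) the map sending nonzero t ∈ ℂ to the class of (fun i => t ^ (w i) * x i) tends, as t → 0 within ℂ \ {0}, to the class of the nonzero vector y defined by y i = x i if w i = c and y i = 0 otherwise; (b) the class [y] lies in Z; and (c) if [x] ∈ Z then [y] = [x]. Consequently the limit map p : Y → Z is a well-defined surjective retraction of Y onto Z. (There is a natural surjective retraction p_β : Y_β → Z_β given by taking the limit as t → 0 under the one-parameter subgroup λ_β.) -/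
import Mathlib


open scoped LinearAlgebra.Projectivization RealInnerProductSpace

/-- The quotient topology on the projectivization of `Fin (n+1) → ℂ`. -/
noncomputable instance projTop {n : ℕ} : TopologicalSpace (ℙ ℂ (Fin (n + 1) → ℂ)) :=
  inferInstanceAs (TopologicalSpace (Quotient (projectivizationSetoid ℂ (Fin (n + 1) → ℂ))))

/-- For `t ≠ 0` and `x ≠ 0`, the coordinate-wise scaled vector `i ↦ t ^ (w i) * x i`
is nonzero. -/
theorem scale_ne_zero {n : ℕ} (w : Fin (n + 1) → ℤ) {x : Fin (n + 1) → ℂ} (hx : x ≠ 0)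
    {t : ℂ} (ht : t ≠ 0) : (fun i => t ^ (w i) * x i) ≠ 0 := by
  obtain ⟨i, hi⟩ := Function.ne_iff.mp hx
  intro h
  have h2 := congrFun h i
  simp only [Pi.zero_apply, mul_eq_zero] at h2
  rcases h2 with h2 | h2
  · exact absurd h2 (zpow_ne_zero _ ht)
  · exact hi (by simpa using h2)

/-- **The retraction `p_β : Y_β → Z_β`**: let `w` be the weight vector of the
one-parameter subgroup `λ_β` and `c` the level of the hyperplane `H_β`. For every
nonzero `x` whose class lies in `Y` (all support weights `≥ c`, at least one `= c`),
setting `y i = x i` when `w i = c` and `y i = 0` otherwise: (a) the class of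
`i ↦ t ^ (w i) * x i` tends to the class of the nonzero vector `y` as `t → 0` in
`ℂ \ {0}`; (b) the class of `y` lies in `Z` (all support weights `= c`); and (c) if the
class of `x` already lies in `Z` then `[y] = [x]`. Hence the limit map is a well-defined
surjective retraction of `Y` onto `Z`. -/
theorem stmt_10 {n : ℕ} (w : Fin (n + 1) → ℤ) (c : ℤ)
    (x : Fin (n + 1) → ℂ) (hx : x ≠ 0)
    (hY1 : ∀ i, x i ≠ 0 → c ≤ w i) (hY2 : ∃ i, x i ≠ 0 ∧ w i = c)
    (y : Fin (n + 1) → ℂ) (hy : y = fun i => if w i = c then x i else 0)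
    (f : ℂ → ℙ ℂ (Fin (n + 1) → ℂ))
    (hf : ∀ (t : ℂ) (ht : t ≠ 0),
      f t = Projectivization.mk ℂ (fun i => t ^ (w i) * x i) (scale_ne_zero w hx ht)) :
    ∃ hy0 : y ≠ 0,
      Filter.Tendsto f (nhdsWithin 0 {0}ᶜ) (nhds (Projectivization.mk ℂ y hy0)) ∧
        (∀ i, y i ≠ 0 → w i = c) ∧
        ((∀ i, x i ≠ 0 → w i = c) →
          Projectivization.mk ℂ y hy0 = Projectivization.mk ℂ x hx) := by
  classical
  obtain ⟨i0, hxi0, hwi0⟩ := hY2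
  have hy0 : y ≠ 0 := by
    intro h
    have := congrFun h i0
    rw [hy] at this
    simp [hwi0, hxi0] at this
  refine ⟨hy0, ?_, ?_, ?_⟩
  · -- tendsto
    have key : Filter.Tendsto (fun t : ℂ => (fun i => t ^ (w i - c) * x i : Fin (n+1) → ℂ))
        (nhdsWithin 0 {0}ᶜ) (nhds y) := by
      rw [tendsto_pi_nhds]
      intro i
      by_cases hxi : x i = 0
      · have hyi : y i = 0 := by simp [hy, hxi]
        simpa [hxi, hyi] using (tendsto_const_nhds :
          Filter.Tendsto (fun _ : ℂ => (0:ℂ)) (nhdsWithin 0 {0}ᶜ) (nhds 0))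
      · by_cases hwi : w i = c
        · have hyi : y i = x i := by simp [hy, hwi]
          have h1 : (fun t : ℂ => t ^ (w i - c) * x i) = fun _ => x i := by
            funext t; simp [hwi]
          rw [h1, hyi]; exact tendsto_const_nhds
        · have hlt : c < w i := lt_of_le_of_ne (hY1 i hxi) (Ne.symm hwi)
          have hyi : y i = 0 := by simp [hy, hwi]
          rw [hyi]
          have h0 : Filter.Tendsto (fun t : ℂ => t ^ (w i - c).toNat)
              (nhdsWithin 0 {0}ᶜ) (nhds 0) := by
            have := ((continuous_pow (w i - c).toNat (M := ℂ)).tendsto 0).mono_left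
              (nhdsWithin_le_nhds (s := {0}ᶜ))
            simpa [zero_pow (by omega : (w i - c).toNat ≠ 0)] using this
          have h2 : Filter.Tendsto (fun t : ℂ => t ^ (w i - c))
              (nhdsWithin 0 {0}ᶜ) (nhds 0) := by
            refine h0.congr' ?_
            filter_upwards [self_mem_nhdsWithin] with t ht
            rw [← zpow_natCast, Int.toNat_of_nonneg (by omega : (0:ℤ) ≤ w i - c)]
          simpa using h2.mul_const (x i)
    set g : ℂ → {v : Fin (n+1) → ℂ // v ≠ 0} := fun t =>
      if ht : t = 0 then ⟨y, hy0⟩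
      else ⟨fun i => t ^ (w i - c) * x i, scale_ne_zero (fun i => w i - c) hx ht⟩ with hg
    have hgt : Filter.Tendsto g (nhdsWithin 0 {0}ᶜ) (nhds ⟨y, hy0⟩) := by
      rw [tendsto_subtype_rng]
      refine key.congr' ?_
      filter_upwards [self_mem_nhdsWithin] with t ht
      have ht' : t ≠ 0 := ht
      rw [hg]
      simp only [dif_neg ht']
    have hcont : Continuous (fun v : {v : Fin (n+1) → ℂ // v ≠ 0} =>
        Projectivization.mk ℂ v.1 v.2) := continuous_quotient_mk'
    have hcomp := (hcont.tendsto ⟨y, hy0⟩).comp hgt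
    refine hcomp.congr' ?_
    filter_upwards [self_mem_nhdsWithin] with t ht
    have ht' : t ≠ 0 := Set.mem_compl_iff _ _ |>.mp ht
    rw [hf t ht']
    show Projectivization.mk ℂ (g t).1 (g t).2 = _
    simp only [hg, dif_neg ht']
    rw [Projectivization.mk_eq_mk_iff]
    refine ⟨Units.mk0 (t ^ (-c)) (zpow_ne_zero _ ht'), ?_⟩
    funext i
    show t ^ (-c) * (t ^ (w i) * x i) = t ^ (w i - c) * x i
    rw [← mul_assoc, ← zpow_add₀ ht', neg_add_eq_sub]
  · intro i hyi
    by_contra hwi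
    rw [hy] at hyi
    simp [hwi] at hyi
  · intro hZ
    have hyx : y = x := by
      funext i
      by_cases hwi : w i = c
      · simp [hy, hwi]
      · have : x i = 0 := by
          by_contra hxi; exact hwi (hZ i hxi)
        simp [hy, hwi, this]
    subst hyx
    rfl
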